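/- Suppose $f^*$ is $C^2$ on $\mathcal{X}\subset\mathbb{R}^d$, $\mu$ is a $C^1$ strictly positive density, $\lambda^* > 0$, and $f^*$ satisfies $\nabla_i f^*(x) = \frac{D^{-i}F_{\mathbb{Q}}(x) - D^{-i}F_{\mathbb{P}}(x)}{\lambda^* d\, \mu(x)}$ for all $i$. Then $f^*$ satisfies the PDE $\Delta f^*(x) + \langle \nabla \log\mu(x), \nabla f^*(x)\rangle + \frac{\mathbb{P}(x)-\mathbb{Q}(x)}{\lambda^* \mu(x)} = 0$. -/

import Mathlib

open MeasureTheory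

noncomputable def pdv {d : ℕ} (i : Fin d) (F : (Fin d → ℝ) → ℝ) : (Fin d → ℝ) → ℝ :=
  fun x => deriv (fun t : ℝ => F (Function.update x i t)) (x i)

noncomputable def Dnot {d : ℕ} (i : Fin d) (F : (Fin d → ℝ) → ℝ) : (Fin d → ℝ) → ℝ :=
  ((Finset.univ.erase i).toList).foldr (fun j G => pdv j G) F

noncomputable def jcdf {d : ℕ} (P : (Fin d → ℝ) → ℝ) : (Fin d → ℝ) → ℝ :=
  fun x => ∫ u in Set.Iic x, P u

lemma hasDerivAt_update' {d : ℕ} (x : Fin d → ℝ) (i : Fin d) (t : ℝ) :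
    HasDerivAt (fun s : ℝ => Function.update x i s) (Pi.single i (1:ℝ)) t := by
  have h : (fun s : ℝ => Function.update x i s)
      = fun s => Function.update x i 0 + s • Pi.single i (1:ℝ) := by
    funext s j
    rcases eq_or_ne j i with rfl | hji
    · simp
    · simp [Function.update_of_ne hji, Pi.single_eq_of_ne hji]
  rw [h]
  simpa using ((hasDerivAt_id t).smul_const (Pi.single i (1:ℝ))).const_add (Function.update x i 0)

lemma hasDerivAt_comp_update {d : ℕ} {F : (Fin d → ℝ) → ℝ} {x : Fin d → ℝ} {i : Fin d} {t : ℝ}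
    (hF : DifferentiableAt ℝ F (Function.update x i t)) :
    HasDerivAt (fun s => F (Function.update x i s))
      (fderiv ℝ F (Function.update x i t) (Pi.single i 1)) t :=
  hF.hasFDerivAt.comp_hasDerivAt t (hasDerivAt_update' x i t)

lemma pdv_eq_fderiv {d : ℕ} {F : (Fin d → ℝ) → ℝ} {x : Fin d → ℝ} {i : Fin d}
    (hF : DifferentiableAt ℝ F x) :
    pdv i F x = fderiv ℝ F x (Pi.single i 1) := by
  have h := hasDerivAt_comp_update (x := x) (i := i) (t := x i)
    (by simpa [Function.update_eq_self] using hF)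
  simp only [Function.update_eq_self] at h
  simpa [pdv] using h.deriv

lemma pdv_hasDerivAt {d : ℕ} {F : (Fin d → ℝ) → ℝ} {x : Fin d → ℝ} {i : Fin d}
    (hF : DifferentiableAt ℝ F x) :
    HasDerivAt (fun s => F (Function.update x i s)) (pdv i F x) (x i) := by
  rw [pdv_eq_fderiv hF]
  have h := hasDerivAt_comp_update (x := x) (i := i) (t := x i)
    (by simpa [Function.update_eq_self] using hF)
  simpa [Function.update_eq_self] using h

lemma contDiff_pdv {d : ℕ} {F : (Fin d → ℝ) → ℝ} {i : Fin d} {n : ℕ∞}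
    (hF : ContDiff ℝ (n + 1) F) : ContDiff ℝ n (pdv i F) := by
  have hdiff : Differentiable ℝ F := hF.differentiable (by simp)
  have h : pdv i F = fun x => fderiv ℝ F x (Pi.single i 1) :=
    funext fun x => pdv_eq_fderiv (hdiff x)
  rw [h]
  exact ((ContinuousLinearMap.apply ℝ ℝ (Pi.single i (1:ℝ))).contDiff.of_le le_top).comp
    (hF.fderiv_right le_rfl)

lemma contDiff_foldr_pdv {d : ℕ} (l : List (Fin d)) (F : (Fin d → ℝ) → ℝ) {m : ℕ}
    (hF : ContDiff ℝ ((m + l.length : ℕ) : ℕ∞) F) :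
    ContDiff ℝ (m : ℕ∞) (l.foldr (fun j G => pdv j G) F) := by
  induction l generalizing m with
  | nil => simpa using hF
  | cons j l ih =>
    simp only [List.foldr_cons]
    have h1 : ContDiff ℝ ((m + 1 : ℕ) : ℕ∞) (l.foldr (fun j G => pdv j G) F) := by
      apply ih
      convert hF using 2
      simp [List.length_cons]
      ring
    have : ContDiff ℝ ((m : ℕ∞) + 1) (l.foldr (fun j G => pdv j G) F) := by
      exact_mod_cast h1
    exact contDiff_pdv this

lemma contDiff_Dnot {d : ℕ} (hd : 0 < d) (i : Fin d) {F : (Fin d → ℝ) → ℝ}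
    (hF : ContDiff ℝ d F) : ContDiff ℝ 1 (Dnot i F) := by
  have hlen : ((Finset.univ.erase i).toList).length = d - 1 := by
    rw [Finset.length_toList, Finset.card_erase_of_mem (Finset.mem_univ i)]
    simp
  have : ContDiff ℝ ((1 + ((Finset.univ.erase i).toList).length : ℕ) : ℕ∞) F := by
    rw [hlen]
    have : 1 + (d - 1) = d := by omega
    rw [this]; exact hF
  simpa [Dnot] using contDiff_foldr_pdv _ F this


/-- If `∇ᵢ f*(x) = (D^{-i}F_Q(x) - D^{-i}F_P(x)) / (λ* d μ(x))` for all `i`, then `f*`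
solves the elliptic PDE `Δf* + ⟨∇ log μ, ∇f*⟩ + (P - Q)/(λ* μ) = 0`. -/
theorem sobolev_critic_satisfies_pde {d : ℕ} (hd : 0 < d)
    (μ P Q : (Fin d → ℝ) → ℝ) (fstar : (Fin d → ℝ) → ℝ)
    (hμ : ∀ x, 0 < μ x) (hμsmooth : ContDiff ℝ 1 μ)
    (hfsmooth : ContDiff ℝ 2 fstar)
    (hFP : ContDiff ℝ d (jcdf P)) (hFQ : ContDiff ℝ d (jcdf Q))
    -- regularity of the CDFs, so that `∂ᵢ D^{-i} F_P = P` and `∂ᵢ D^{-i} F_Q = Q`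
    (hPder : ∀ (i : Fin d) (x : Fin d → ℝ), pdv i (Dnot i (jcdf P)) x = P x)
    (hQder : ∀ (i : Fin d) (x : Fin d → ℝ), pdv i (Dnot i (jcdf Q)) x = Q x)
    (lam : ℝ) (hlam : 0 < lam)
    (hgrad : ∀ (i : Fin d) (x : Fin d → ℝ),
        pdv i fstar x = (Dnot i (jcdf Q) x - Dnot i (jcdf P) x) / (lam * d * μ x)) :
    ∀ x : Fin d → ℝ,
      (∑ i, pdv i (pdv i fstar) x)
        + (∑ i, pdv i (fun y => Real.log (μ y)) x * pdv i fstar x)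
        + (P x - Q x) / (lam * μ x) = 0 := by
  intro x
  have hμdiff : Differentiable ℝ μ := hμsmooth.differentiable one_ne_zero
  have hdpos : (0:ℝ) < d := by exact_mod_cast hd
  have hμx := hμ x
  have hne : lam * (d:ℝ) * μ x ≠ 0 := by positivity
  have hlog : ∀ i : Fin d, pdv i (fun y => Real.log (μ y)) x = pdv i μ x / μ x := by
    intro i
    have hμ' : HasDerivAt (fun s => μ (Function.update x i s)) (pdv i μ x) (x i) :=
      pdv_hasDerivAt (hμdiff x)
    have hL : HasDerivAt (fun s => Real.log (μ (Function.update x i s)))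
        (pdv i μ x / μ (Function.update x i (x i))) (x i) :=
      hμ'.log (by simp [Function.update_eq_self]; exact (hμ x).ne')
    simp only [Function.update_eq_self] at hL
    simpa [pdv] using hL.deriv
  have key : ∀ i : Fin d, pdv i (pdv i fstar) x
      = (Q x - P x) / (lam * d * μ x)
        - (pdv i μ x / μ x) * pdv i fstar x := by
    intro i
    have hgfun : pdv i fstar
        = fun y => (Dnot i (jcdf Q) y - Dnot i (jcdf P) y) / (lam * d * μ y) :=
      funext (hgrad i)
    have hGQ : Differentiable ℝ (Dnot i (jcdf Q)) :=
      (contDiff_Dnot hd i hFQ).differentiable one_ne_zero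
    have hGP : Differentiable ℝ (Dnot i (jcdf P)) :=
      (contDiff_Dnot hd i hFP).differentiable one_ne_zero
    have hQ' : HasDerivAt (fun s => Dnot i (jcdf Q) (Function.update x i s)) (Q x) (x i) := by
      have := pdv_hasDerivAt (F := Dnot i (jcdf Q)) (x := x) (i := i) (hGQ x)
      rwa [hQder] at this
    have hP' : HasDerivAt (fun s => Dnot i (jcdf P) (Function.update x i s)) (P x) (x i) := by
      have := pdv_hasDerivAt (F := Dnot i (jcdf P)) (x := x) (i := i) (hGP x)
      rwa [hPder] at this
    have hμ' : HasDerivAt (fun s => μ (Function.update x i s)) (pdv i μ x) (x i) :=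
      pdv_hasDerivAt (hμdiff x)
    have hden : HasDerivAt (fun s => lam * d * μ (Function.update x i s))
        (lam * d * pdv i μ x) (x i) := hμ'.const_mul _
    have hdiv := (hQ'.sub hP').div hden
      (by simp only [Function.update_eq_self]; exact hne)
    rw [hgfun]
    have hd' : pdv i (fun y => (Dnot i (jcdf Q) y - Dnot i (jcdf P) y) / (lam * ↑d * μ y)) x
        = ((Q x - P x) * (lam * d * μ (Function.update x i (x i)))
            - (Dnot i (jcdf Q) (Function.update x i (x i))
                - Dnot i (jcdf P) (Function.update x i (x i))) * (lam * d * pdv i μ x))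
          / (lam * d * μ (Function.update x i (x i)))^2 := by
      simpa [pdv, Pi.div_def, Pi.sub_def] using hdiv.deriv
    rw [hd']
    simp only [Function.update_eq_self]
    field_simp
  simp only [key, hlog]
  rw [Finset.sum_sub_distrib, Finset.sum_const, Finset.card_univ, Fintype.card_fin,
    nsmul_eq_mul]
  have hμne := (hμ x).ne'
  field_simp
  ring
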